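/- Let A be a symmetric nonnegative tensor. Then A is a Q-tensor if and only if A is strictly copositive. -/

import Mathlib

open Finset

/-- The $i$-th component of $\mathcal{A}x^{m-1}$ for an order-$(m+2)$, dimension-$n$ tensor. -/
def Axm1 {m n : ℕ} (A : (Fin (m + 2) → Fin n) → ℝ) (x : Fin n → ℝ) (i : Fin n) : ℝ :=
  ∑ f : Fin (m + 1) → Fin n, A (Fin.cons i f) * ∏ j, x (f j)

/-- The homogeneous form $\mathcal{A}x^{m}$. -/
def Axm {m n : ℕ} (A : (Fin (m + 2) → Fin n) → ℝ) (x : Fin n → ℝ) : ℝ :=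
  ∑ f : Fin (m + 2) → Fin n, A f * ∏ j, x (f j)

/-- `x` solves the tensor complementarity problem $(q, \mathcal{A})$. -/
def IsTCPSol {m n : ℕ} (A : (Fin (m + 2) → Fin n) → ℝ) (q x : Fin n → ℝ) : Prop :=
  (∀ i, 0 ≤ x i) ∧ (∀ i, 0 ≤ q i + Axm1 A x i) ∧ ∑ i, x i * (q i + Axm1 A x i) = 0

/-- Q-tensor: the TCP $(q,\mathcal{A})$ has a solution for every $q$. -/
def QTensor {m n : ℕ} (A : (Fin (m + 2) → Fin n) → ℝ) : Prop :=
  ∀ q : Fin n → ℝ, ∃ x : Fin n → ℝ, IsTCPSol A q x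

/-- R-tensor. -/
def RTensor {m n : ℕ} (A : (Fin (m + 2) → Fin n) → ℝ) : Prop :=
  ¬ ∃ (x : Fin n → ℝ) (t : ℝ), (∀ i, 0 ≤ x i) ∧ x ≠ 0 ∧ 0 ≤ t ∧
      (∀ i, 0 < x i → Axm1 A x i + t = 0) ∧ (∀ j, x j = 0 → 0 ≤ Axm1 A x j + t)

/-- R₀-tensor. -/
def R0Tensor {m n : ℕ} (A : (Fin (m + 2) → Fin n) → ℝ) : Prop :=
  ¬ ∃ x : Fin n → ℝ, (∀ i, 0 ≤ x i) ∧ x ≠ 0 ∧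
      (∀ i, 0 < x i → Axm1 A x i = 0) ∧ (∀ j, x j = 0 → 0 ≤ Axm1 A x j)

/-- Semi-positive tensor. -/
def SemiPositive {m n : ℕ} (A : (Fin (m + 2) → Fin n) → ℝ) : Prop :=
  ∀ x : Fin n → ℝ, (∀ i, 0 ≤ x i) → x ≠ 0 → ∃ k, 0 < x k ∧ 0 ≤ Axm1 A x k

/-- Strictly semi-positive tensor. -/
def StrictlySemiPositive {m n : ℕ} (A : (Fin (m + 2) → Fin n) → ℝ) : Prop :=
  ∀ x : Fin n → ℝ, (∀ i, 0 ≤ x i) → x ≠ 0 → ∃ k, 0 < x k ∧ 0 < Axm1 A x k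

/-- P-tensor. -/
def PTensor {m n : ℕ} (A : (Fin (m + 2) → Fin n) → ℝ) : Prop :=
  ∀ x : Fin n → ℝ, x ≠ 0 → ∃ i, 0 < x i * Axm1 A x i

/-- Symmetric tensor: entries invariant under permutation of indices. -/
def SymTensor {m n : ℕ} (A : (Fin (m + 2) → Fin n) → ℝ) : Prop :=
  ∀ (f : Fin (m + 2) → Fin n) (σ : Equiv.Perm (Fin (m + 2))), A (f ∘ σ) = A f

/-- Copositive tensor. -/
def Copositive {m n : ℕ} (A : (Fin (m + 2) → Fin n) → ℝ) : Prop :=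
  ∀ x : Fin n → ℝ, (∀ i, 0 ≤ x i) → 0 ≤ Axm A x

/-- Strictly copositive tensor. -/
def StrictlyCopositive {m n : ℕ} (A : (Fin (m + 2) → Fin n) → ℝ) : Prop :=
  ∀ x : Fin n → ℝ, (∀ i, 0 ≤ x i) → x ≠ 0 → 0 < Axm A x


section Aux

variable {m n : ℕ}

lemma axm1_nonneg (A : (Fin (m + 2) → Fin n) → ℝ) (hA : ∀ f, 0 ≤ A f)
    {x : Fin n → ℝ} (hx : ∀ i, 0 ≤ x i) (i : Fin n) : 0 ≤ Axm1 A x i :=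
  Finset.sum_nonneg fun f _ => mul_nonneg (hA _) (Finset.prod_nonneg fun j _ => hx _)

lemma tcp_term_zero {A : (Fin (m + 2) → Fin n) → ℝ} {q x : Fin n → ℝ}
    (h : IsTCPSol A q x) (i : Fin n) : x i * (q i + Axm1 A x i) = 0 :=
  (Finset.sum_eq_zero_iff_of_nonneg
    (fun j _ => mul_nonneg (h.1 j) (h.2.1 j))).mp h.2.2 i (Finset.mem_univ i)

lemma diag_pos_of_Q {A : (Fin (m + 2) → Fin n) → ℝ} (hA : ∀ f, 0 ≤ A f)
    (hQ : QTensor A) (i : Fin n) : 0 < A (fun _ => i) := by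
  by_contra h0
  have hdiag : A (fun _ => i) = 0 := le_antisymm (not_lt.mp h0) (hA _)
  obtain ⟨x, hx⟩ := hQ (fun k => if k = i then -1 else 1)
  have hxnn := hx.1
  -- every coordinate different from i vanishes
  have hzero : ∀ k, k ≠ i → x k = 0 := by
    intro k hk
    have h1 : x k * ((if k = i then (-1:ℝ) else 1) + Axm1 A x k) = 0 := tcp_term_zero hx k
    rw [if_neg hk] at h1
    have h2 : 0 < 1 + Axm1 A x k := by
      have := axm1_nonneg A hA hxnn k
      linarith
    rcases mul_eq_zero.mp h1 with h | h
    · exact h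
    · linarith
  -- then Axm1 A x i = A(diag) * x i ^ (m+1) = 0
  have hAx : Axm1 A x i = 0 := by
    unfold Axm1
    rw [Finset.sum_eq_single (fun _ => i)]
    · have : (Fin.cons i (fun _ => i) : Fin (m + 2) → Fin n) = fun _ => i := by
        funext k
        refine Fin.cases ?_ ?_ k <;> simp
      rw [this, hdiag, zero_mul]
    · intro f _ hf
      have : ∃ j, f j ≠ i := by
        by_contra hc
        push_neg at hc
        exact hf (funext hc)
      obtain ⟨j, hj⟩ := this
      rw [Finset.prod_eq_zero (Finset.mem_univ j) (hzero _ hj), mul_zero]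
    · intro h; exact absurd (Finset.mem_univ _) h
  have h := hx.2.1 i
  rw [hAx] at h
  simp at h
  linarith

lemma strictlyCopositive_of_diag {A : (Fin (m + 2) → Fin n) → ℝ} (hA : ∀ f, 0 ≤ A f)
    (hd : ∀ i, 0 < A (fun _ => i)) : StrictlyCopositive A := by
  intro x hx hx0
  obtain ⟨i, hi⟩ := Function.ne_iff.mp hx0
  have hxi : 0 < x i := lt_of_le_of_ne (hx i) (Ne.symm hi)
  have hterm : 0 < A (fun _ => i) * ∏ j : Fin (m + 2), x ((fun _ => i) j) := by
    simp only [Finset.prod_const]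
    exact mul_pos (hd i) (pow_pos hxi _)
  have hle : A (fun _ => i) * ∏ j : Fin (m + 2), x ((fun _ => i) j) ≤ Axm A x :=
    Finset.single_le_sum (f := fun f => A f * ∏ j, x (f j))
      (fun f _ => mul_nonneg (hA f) (Finset.prod_nonneg fun j _ => hx _))
      (Finset.mem_univ _)
  exact lt_of_lt_of_le hterm hle

lemma continuous_axm (A : (Fin (m + 2) → Fin n) → ℝ) : Continuous (Axm A) := by
  unfold Axm
  exact continuous_finset_sum _ fun f _ =>
    continuous_const.mul (continuous_finset_prod _ fun j _ => continuous_apply _)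

lemma axm_smul (A : (Fin (m + 2) → Fin n) → ℝ) (c : ℝ) (x : Fin n → ℝ) :
    Axm A (c • x) = c ^ (m + 2) * Axm A x := by
  unfold Axm
  rw [Finset.mul_sum]
  refine Finset.sum_congr rfl fun f _ => ?_
  have : ∏ j, (c • x) (f j) = c ^ (m + 2) * ∏ j, x (f j) := by
    simp only [Pi.smul_apply, smul_eq_mul]
    rw [Finset.prod_mul_distrib, Finset.prod_const]
    simp
  rw [this]; ring

lemma prod_erase_zero {N : ℕ} (h : Fin (N + 1) → ℝ) :
    ∏ k ∈ Finset.univ.erase (0 : Fin (N + 1)), h k = ∏ k : Fin N, h k.succ := by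
  have himg : Finset.univ.erase (0 : Fin (N + 1)) = Finset.univ.image Fin.succ := by
    ext k
    simp [Fin.exists_succ_eq]
  rw [himg, Finset.prod_image (fun a _ b _ hab => Fin.succ_injective _ hab)]

lemma sum_pos0 (A : (Fin (m + 2) → Fin n) → ℝ) (x : Fin n → ℝ) (i : Fin n) :
    ∑ f : Fin (m + 2) → Fin n,
      A f * ((∏ k ∈ Finset.univ.erase (0 : Fin (m + 2)), x (f k)) *
        (if f 0 = i then (1 : ℝ) else 0)) = Axm1 A x i := by
  rw [← (Fin.consEquiv (fun _ => Fin n)).sum_comp]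
  unfold Axm1
  rw [Fintype.sum_prod_type]
  rw [Finset.sum_comm]
  refine Finset.sum_congr rfl fun g _ => ?_
  have hprod : ∀ a : Fin n,
      ∏ k ∈ Finset.univ.erase (0 : Fin (m + 2)), x ((Fin.cons a g : Fin (m + 2) → Fin n) k) = ∏ k : Fin (m + 1), x (g k) := by
    intro a
    rw [prod_erase_zero]
    simp [Fin.cons_succ]
  simp only [Fin.consEquiv_apply, Fin.cons_zero, hprod, mul_ite, mul_one, mul_zero]
  rw [Finset.sum_ite_eq' Finset.univ i
    (fun a => A ((Fin.consEquiv fun _ => Fin n) (a, g)) * ∏ k, x (g k))]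
  simp [Fin.consEquiv]

lemma sum_posj (A : (Fin (m + 2) → Fin n) → ℝ) (hsym : SymTensor A) (x : Fin n → ℝ)
    (i : Fin n) (j : Fin (m + 2)) :
    ∑ f : Fin (m + 2) → Fin n,
      A f * ((∏ k ∈ Finset.univ.erase j, x (f k)) * (if f j = i then (1 : ℝ) else 0))
      = Axm1 A x i := by
  rw [← sum_pos0 A x i]
  have hinv : Function.Involutive
      (fun f : Fin (m + 2) → Fin n => f ∘ (Equiv.swap (0 : Fin (m + 2)) j)) := by
    intro f
    funext k
    simp [Function.comp, Equiv.swap_apply_self]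
  refine Fintype.sum_bijective _ hinv.bijective _ _ fun f => ?_
  have hA : A (f ∘ (Equiv.swap (0 : Fin (m + 2)) j)) = A f := hsym f _
  have h0 : (f ∘ (Equiv.swap (0 : Fin (m + 2)) j)) 0 = f j := by
    simp [Function.comp, Equiv.swap_apply_left]
  have hprod : ∏ k ∈ Finset.univ.erase j, x (f k)
      = ∏ k ∈ Finset.univ.erase (0 : Fin (m + 2)), x ((f ∘ (Equiv.swap (0 : Fin (m + 2)) j)) k) := by
    refine Finset.prod_equiv (Equiv.swap (0 : Fin (m + 2)) j).symm ?_ ?_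
    · intro k
      simp only [Finset.mem_erase, Finset.mem_univ, and_true]
      constructor
      · intro hk hc
        apply hk
        have := congrArg (Equiv.swap (0 : Fin (m + 2)) j) hc
        simpa [Equiv.swap_apply_left] using this
      · intro hk hc
        apply hk
        rw [hc]
        simp [Equiv.swap_apply_right]
    · intro k _
      simp [Function.comp, Equiv.swap_apply_self]
  rw [hA, h0, hprod]

lemma hasDerivAt_axm_dir (A : (Fin (m + 2) → Fin n) → ℝ) (hsym : SymTensor A)
    (x : Fin n → ℝ) (i : Fin n) :
    HasDerivAt (fun t : ℝ => Axm A (fun k => x k + t * (if k = i then 1 else 0)))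
      ((m + 2 : ℝ) * Axm1 A x i) 0 := by
  have key : ∀ f : Fin (m + 2) → Fin n,
      HasDerivAt (fun t : ℝ => A f * ∏ j, (x (f j) + t * (if f j = i then (1:ℝ) else 0)))
        (A f * ∑ j, (∏ k ∈ Finset.univ.erase j, x (f k)) * (if f j = i then (1:ℝ) else 0)) 0 := by
    intro f
    have hfac : ∀ j : Fin (m + 2),
        HasDerivAt (fun t : ℝ => x (f j) + t * (if f j = i then (1:ℝ) else 0))
          (if f j = i then (1:ℝ) else 0) 0 := by
      intro j
      simpa using ((hasDerivAt_id (0:ℝ)).mul_const (if f j = i then (1:ℝ) else 0)).const_add (x (f j))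
    have hp := HasDerivAt.fun_finsetProd (u := Finset.univ) (x := (0:ℝ))
      (f := fun j t => x (f j) + t * (if f j = i then (1:ℝ) else 0))
      (f' := fun j => if f j = i then (1:ℝ) else 0) (fun j _ => hfac j)
    have hp' : HasDerivAt (fun t : ℝ => ∏ j, (x (f j) + t * (if f j = i then (1:ℝ) else 0)))
        (∑ j, (∏ k ∈ Finset.univ.erase j, x (f k)) * (if f j = i then (1:ℝ) else 0)) 0 := by
      refine hp.congr_deriv (Finset.sum_congr rfl fun j _ => ?_)
      · rw [smul_eq_mul]
        congr 1
        refine Finset.prod_congr rfl fun k _ => ?_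
        simp
    exact hp'.const_mul (A f)
  have hsumd := HasDerivAt.fun_sum (u := Finset.univ) (x := (0:ℝ))
    (A := fun f t => A f * ∏ j, (x (f j) + t * (if f j = i then (1:ℝ) else 0)))
    (A' := fun f => A f * ∑ j, (∏ k ∈ Finset.univ.erase j, x (f k)) * (if f j = i then (1:ℝ) else 0))
    (fun f _ => key f)
  have heq : ∑ f : Fin (m + 2) → Fin n,
      A f * ∑ j, (∏ k ∈ Finset.univ.erase j, x (f k)) * (if f j = i then (1:ℝ) else 0)
      = (m + 2 : ℝ) * Axm1 A x i := by
    simp_rw [Finset.mul_sum]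
    rw [Finset.sum_comm]
    have : ∀ j : Fin (m + 2), ∑ f : Fin (m + 2) → Fin n,
        A f * ((∏ k ∈ Finset.univ.erase j, x (f k)) * (if f j = i then (1:ℝ) else 0))
        = Axm1 A x i := fun j => sum_posj A hsym x i j
    simp_rw [← mul_assoc] at this ⊢
    calc ∑ j : Fin (m + 2), ∑ f : Fin (m + 2) → Fin n,
          A f * (∏ k ∈ Finset.univ.erase j, x (f k)) * (if f j = i then (1:ℝ) else 0)
        = ∑ j : Fin (m + 2), Axm1 A x i := by
          refine Finset.sum_congr rfl fun j _ => ?_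
          have h := this j
          simpa [mul_assoc] using h
      _ = (m + 2 : ℝ) * Axm1 A x i := by
          rw [Finset.sum_const, Finset.card_univ, Fintype.card_fin, nsmul_eq_mul]
          push_cast
          ring
  rw [← heq]
  exact hsumd

lemma deriv_nonneg_of_rightmin {φ : ℝ → ℝ} {D ε : ℝ} (hd : HasDerivAt φ D 0) (hε : 0 < ε)
    (hm : ∀ t, 0 ≤ t → t < ε → φ 0 ≤ φ t) : 0 ≤ D := by
  have h := hasDerivAt_iff_tendsto_slope.mp hd
  have h' : Filter.Tendsto (slope φ 0) (nhdsWithin 0 (Set.Ioi 0)) (nhds D) :=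
    h.mono_left (nhdsWithin_mono 0 (fun t ht => ne_of_gt ht))
  refine ge_of_tendsto h' ?_
  filter_upwards [Ioo_mem_nhdsGT_of_mem ⟨le_refl (0:ℝ), hε⟩] with t ht
  rw [slope_def_field]
  have h1 : φ 0 ≤ φ t := hm t ht.1.le ht.2
  have h2 : (0:ℝ) < t - 0 := by simpa using ht.1
  exact div_nonneg (by linarith) h2.le


lemma hasDerivAt_F_dir (A : (Fin (m + 2) → Fin n) → ℝ) (hsym : SymTensor A)
    (q x : Fin n → ℝ) (i : Fin n) :
    HasDerivAt (fun t : ℝ => Axm A (fun k => x k + t * (if k = i then 1 else 0))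
        + (m + 2 : ℝ) * ∑ k, q k * (x k + t * (if k = i then 1 else 0)))
      ((m + 2 : ℝ) * (Axm1 A x i + q i)) 0 := by
  have h1 := hasDerivAt_axm_dir A hsym x i
  have h2 : HasDerivAt (fun t : ℝ => ∑ k, q k * (x k + t * (if k = i then (1:ℝ) else 0)))
      (q i) 0 := by
    have hfac : ∀ k : Fin n,
        HasDerivAt (fun t : ℝ => q k * (x k + t * (if k = i then (1:ℝ) else 0)))
          (q k * (if k = i then (1:ℝ) else 0)) 0 := by
      intro k
      have : HasDerivAt (fun t : ℝ => x k + t * (if k = i then (1:ℝ) else 0))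
          (if k = i then (1:ℝ) else 0) 0 := by
        simpa using ((hasDerivAt_id (0:ℝ)).mul_const (if k = i then (1:ℝ) else 0)).const_add (x k)
      exact this.const_mul (q k)
    have hs := HasDerivAt.fun_sum (u := Finset.univ) (x := (0:ℝ))
      (A := fun k t => q k * (x k + t * (if k = i then (1:ℝ) else 0)))
      (A' := fun k => q k * (if k = i then (1:ℝ) else 0)) (fun k _ => hfac k)
    have : ∑ k, q k * (if k = i then (1:ℝ) else 0) = q i := by
      simp [mul_ite, Finset.sum_ite_eq']
    rwa [this] at hs
  have := h1.fun_add (h2.const_mul ((m + 2 : ℝ)))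
  exact this.congr_deriv (by ring)

end Aux

theorem stmt12 {m n : ℕ} (A : (Fin (m + 2) → Fin n) → ℝ)
    (hsym : SymTensor A) (hA : ∀ f, 0 ≤ A f) :
    QTensor A ↔ StrictlyCopositive A := by
  rcases Nat.eq_zero_or_pos n with hn | hn
  · subst hn
    constructor
    · intro _ x _ hx0
      exact absurd (funext fun i => i.elim0) hx0
    · intro _ q
      exact ⟨fun i => i.elim0, fun i => i.elim0, fun i => i.elim0, by simp⟩
  constructor
  · intro hQ
    exact strictlyCopositive_of_diag hA (diag_pos_of_Q hA hQ)
  intro hSC q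
  -- closedness and boundedness helpers
  have hclnn : IsClosed {x : Fin n → ℝ | ∀ i, 0 ≤ x i} := by
    have : {x : Fin n → ℝ | ∀ i, 0 ≤ x i} = ⋂ i, {x | 0 ≤ x i} := by
      ext y; simp [Set.mem_iInter]
    rw [this]
    exact isClosed_iInter fun i => isClosed_le continuous_const (continuous_apply i)
  have hcsum : Continuous (fun x : Fin n → ℝ => ∑ i, x i) :=
    continuous_finset_sum _ fun i _ => continuous_apply i
  have hbdd : ∀ r : ℝ, 0 ≤ r →
      Bornology.IsBounded {x : Fin n → ℝ | (∀ i, 0 ≤ x i) ∧ ∑ i, x i ≤ r} := by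
    intro r hr
    refine (Metric.isBounded_closedBall (x := (0 : Fin n → ℝ)) (r := r)).subset ?_
    intro x hx
    rw [Metric.mem_closedBall, dist_zero_right, pi_norm_le_iff_of_nonneg hr]
    intro i
    rw [Real.norm_eq_abs, abs_of_nonneg (hx.1 i)]
    exact le_trans (Finset.single_le_sum (fun j _ => hx.1 j) (Finset.mem_univ i)) hx.2
  -- minimum of Axm on the simplex
  set S : Set (Fin n → ℝ) := {x | (∀ i, 0 ≤ x i) ∧ ∑ i, x i = 1} with hSdef
  have hScomp : IsCompact S := by
    apply Metric.isCompact_of_isClosed_isBounded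
    · rw [hSdef, Set.setOf_and]
      exact hclnn.inter (isClosed_eq hcsum continuous_const)
    · refine (hbdd 1 zero_le_one).subset ?_
      intro x hx
      exact ⟨hx.1, le_of_eq hx.2⟩
  have hSne : S.Nonempty := by
    refine ⟨fun _ => (n : ℝ)⁻¹, fun i => by positivity, ?_⟩
    rw [Finset.sum_const, Finset.card_univ, Fintype.card_fin, nsmul_eq_mul]
    rw [mul_inv_cancel₀]
    exact_mod_cast hn.ne'
  obtain ⟨z, hzS, hz⟩ := hScomp.exists_isMinOn hSne (continuous_axm A).continuousOn
  set c : ℝ := Axm A z with hcdef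
  have hc : 0 < c := by
    apply hSC z hzS.1
    intro h0
    have := hzS.2
    rw [h0] at this
    simp at this
  -- lower bound by homogeneity
  have hlow : ∀ x : Fin n → ℝ, (∀ i, 0 ≤ x i) → 0 < ∑ i, x i →
      c * (∑ i, x i) ^ (m + 2) ≤ Axm A x := by
    intro x hx hs
    set s : ℝ := ∑ i, x i with hsdef
    have hu : s⁻¹ • x ∈ S := by
      constructor
      · intro k
        exact mul_nonneg (inv_nonneg.mpr hs.le) (hx k)
      · show ∑ i, s⁻¹ * x i = 1
        rw [← Finset.mul_sum, ← hsdef, inv_mul_cancel₀ hs.ne']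
    have hmin := isMinOn_iff.mp hz _ hu
    have hxeq : x = s • (s⁻¹ • x) := by
      funext k
      show x k = s * (s⁻¹ * x k)
      rw [← mul_assoc, mul_inv_cancel₀ hs.ne', one_mul]
    calc c * s ^ (m + 2) ≤ Axm A (s⁻¹ • x) * s ^ (m + 2) := by
          apply mul_le_mul_of_nonneg_right hmin (pow_nonneg hs.le _)
      _ = Axm A x := by
          have h5 : Axm A x = s ^ (m + 2) * Axm A (s⁻¹ • x) := by
            conv_lhs => rw [hxeq]
            rw [axm_smul]
          rw [h5]
          ring
  set Q' : ℝ := ∑ k, |q k| with hQ'def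
  have hQ'0 : 0 ≤ Q' := Finset.sum_nonneg fun k _ => abs_nonneg _
  set R : ℝ := (m + 2) * Q' / c + 1 with hRdef
  have hR1 : 1 ≤ R := by
    rw [hRdef]
    have : 0 ≤ (m + 2 : ℝ) * Q' / c := by positivity
    linarith
  set F : (Fin n → ℝ) → ℝ := fun x => Axm A x + (m + 2 : ℝ) * ∑ k, q k * x k with hFdef
  -- F is positive far out on the cone
  have hout : ∀ x : Fin n → ℝ, (∀ i, 0 ≤ x i) → R ≤ ∑ i, x i → 0 < F x := by
    intro x hx hRs
    set s : ℝ := ∑ i, x i with hsdef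
    have hs1 : 1 ≤ s := le_trans hR1 hRs
    have hs0 : (0:ℝ) < s := lt_of_lt_of_le one_pos hs1
    have h1 : c * s ^ (m + 2) ≤ Axm A x := hlow x hx hs0
    have h2 : -(Q' * s) ≤ ∑ k, q k * x k := by
      have hterm : ∀ k, 0 ≤ |q k| * s + q k * x k := by
        intro k
        have hxk : x k ≤ s := Finset.single_le_sum (fun j _ => hx j) (Finset.mem_univ k)
        nlinarith [neg_abs_le (q k), abs_nonneg (q k), hx k]
      have hsum : 0 ≤ ∑ k, (|q k| * s + q k * x k) := Finset.sum_nonneg fun k _ => hterm k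
      rw [Finset.sum_add_distrib, ← Finset.sum_mul] at hsum
      linarith
    have hpow : s ≤ s ^ (m + 1) := le_self_pow₀ hs1 (Nat.succ_ne_zero m)
    have hcR' : c * R = (m + 2 : ℝ) * Q' + c := by
      rw [hRdef]
      field_simp
    have hcs : (m + 2 : ℝ) * Q' + c ≤ c * s := by
      have := mul_le_mul_of_nonneg_left hRs hc.le
      linarith
    have e1 : c * s ≤ c * s ^ (m + 1) := mul_le_mul_of_nonneg_left hpow hc.le
    have e2 : (m + 2 : ℝ) * Q' < c * s ^ (m + 1) := by linarith
    have e3 : (m + 2 : ℝ) * Q' * s < c * s ^ (m + 1) * s := mul_lt_mul_of_pos_right e2 hs0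
    have e4 : c * s ^ (m + 1) * s = c * s ^ (m + 2) := by rw [pow_succ]; ring
    have h3 : (m + 2 : ℝ) * (-(Q' * s)) ≤ (m + 2 : ℝ) * ∑ k, q k * x k :=
      mul_le_mul_of_nonneg_left h2 (by positivity)
    have : 0 < c * s ^ (m + 2) - (m + 2 : ℝ) * Q' * s := by linarith
    have hF : F x = Axm A x + (m + 2 : ℝ) * ∑ k, q k * x k := rfl
    nlinarith
  -- the compact feasible region
  set K : Set (Fin n → ℝ) := {x | (∀ i, 0 ≤ x i) ∧ ∑ i, x i ≤ R} with hKdef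
  have hKcomp : IsCompact K := by
    apply Metric.isCompact_of_isClosed_isBounded
    · rw [hKdef, Set.setOf_and]
      exact hclnn.inter (isClosed_le hcsum continuous_const)
    · exact hbdd R (by linarith)
  have h0K : (0 : Fin n → ℝ) ∈ K := by
    refine ⟨fun i => le_refl 0, ?_⟩
    simp
    linarith
  have hFcont : Continuous F := by
    exact (continuous_axm A).add (continuous_const.mul
      (continuous_finset_sum _ fun k _ => continuous_const.mul (continuous_apply k)))
  obtain ⟨x₀, hx₀K, hmin⟩ := hKcomp.exists_isMinOn ⟨0, h0K⟩ hFcont.continuousOn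
  have hF00 : F 0 = 0 := by
    have hA0 : Axm A (0 : Fin n → ℝ) = 0 := by
      unfold Axm
      apply Finset.sum_eq_zero
      intro f _
      rw [Finset.prod_eq_zero (Finset.mem_univ 0)]
      · rw [mul_zero]
      · rfl
    rw [hFdef]
    simp [hA0]
  have hF0 : F x₀ ≤ 0 := by
    have := isMinOn_iff.mp hmin 0 h0K
    rwa [hF00] at this
  have hsR : ∑ k, x₀ k < R := by
    by_contra h
    push_neg at h
    exact absurd (hout x₀ hx₀K.1 h) (by linarith)
  -- stationarity at the minimizer
  have key : ∀ i, 0 ≤ q i + Axm1 A x₀ i ∧ (0 < x₀ i → q i + Axm1 A x₀ i = 0) := by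
    intro i
    set φ : ℝ → ℝ := fun t => Axm A (fun k => x₀ k + t * (if k = i then 1 else 0))
        + (m + 2 : ℝ) * ∑ k, q k * (x₀ k + t * (if k = i then 1 else 0)) with hφdef
    have hd : HasDerivAt φ ((m + 2 : ℝ) * (Axm1 A x₀ i + q i)) 0 :=
      hasDerivAt_F_dir A hsym q x₀ i
    have hφ0 : φ 0 = F x₀ := by
      have hy0 : (fun k => x₀ k + 0 * (if k = i then (1:ℝ) else 0)) = x₀ := by
        funext k; ring
      rw [hφdef]
      simp only [hy0, zero_mul, add_zero]
      rfl
    have hφF : ∀ t : ℝ, φ t = F (fun k => x₀ k + t * (if k = i then 1 else 0)) := fun t => rfl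
    have hsumy : ∀ t : ℝ, ∑ k, (x₀ k + t * (if k = i then (1:ℝ) else 0)) = (∑ k, x₀ k) + t := by
      intro t
      rw [Finset.sum_add_distrib, ← Finset.mul_sum]
      simp [Finset.sum_ite_eq']
    have hmem : ∀ t : ℝ, 0 ≤ t → t < R - ∑ k, x₀ k → φ 0 ≤ φ t := by
      intro t ht htR
      rw [hφ0, hφF]
      apply isMinOn_iff.mp hmin
      constructor
      · intro k
        have h01 : (0:ℝ) ≤ (if k = i then (1:ℝ) else 0) := by split <;> norm_num
        exact add_nonneg (hx₀K.1 k) (mul_nonneg ht h01)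
      · rw [hsumy]
        linarith
    have h1 : 0 ≤ (m + 2 : ℝ) * (Axm1 A x₀ i + q i) :=
      deriv_nonneg_of_rightmin hd (show (0:ℝ) < R - ∑ k, x₀ k by linarith) hmem
    have h1' : 0 ≤ Axm1 A x₀ i + q i :=
      (mul_nonneg_iff_of_pos_left (by positivity)).mp h1
    refine ⟨by linarith, ?_⟩
    intro hxi
    have hδ : 0 < min (x₀ i) (R - ∑ k, x₀ k) := lt_min hxi (by linarith)
    have hloc : IsLocalMin φ 0 := by
      rw [IsLocalMin, IsMinFilter, Metric.eventually_nhds_iff]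
      refine ⟨min (x₀ i) (R - ∑ k, x₀ k), hδ, ?_⟩
      intro t ht
      rw [Real.dist_0_eq_abs] at ht
      have hti : |t| < x₀ i := lt_of_lt_of_le ht (min_le_left _ _)
      have htR : |t| < R - ∑ k, x₀ k := lt_of_lt_of_le ht (min_le_right _ _)
      rw [hφ0, hφF]
      apply isMinOn_iff.mp hmin
      constructor
      · intro k
        by_cases hk : k = i
        · have habs := abs_lt.mp hti
          simp [hk]
          linarith [habs.1]
        · simp only [if_neg hk, mul_zero, add_zero]
          exact hx₀K.1 k
      · rw [hsumy]
        have := le_abs_self t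
        linarith
    have h2 := hloc.hasDerivAt_eq_zero hd
    have h3 : Axm1 A x₀ i + q i = 0 := by
      rcases mul_eq_zero.mp h2 with h | h
      · exact absurd h (show (0:ℝ) < (m:ℝ) + 2 by positivity).ne'
      · exact h
    linarith
  refine ⟨x₀, hx₀K.1, fun i => (key i).1, ?_⟩
  apply Finset.sum_eq_zero
  intro i _
  rcases eq_or_lt_of_le (hx₀K.1 i) with h | h
  · rw [← h, zero_mul]
  · rw [(key i).2 h, mul_zero]
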